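/- arXiv:2102.09031 — 3 statements merged into one kernel-verified Lean document; each statement's English description precedes it below -/
import Mathlib

section
/- Suppose real numbers (η_t) satisfy m/t ≤ η_t ≤ M/t for all 1 ≤ t ≤ T with 0 < m ≤ M, and let c = τμm > 1 for constants τ, μ > 0. Then Σ_{t=1}^{T} η_t² exp(-τμ Σ_{u=t+1}^{T} η_u) ≤ (M² exp(c)/(c-1)) · ((T+1)^{c-1} + c - 2)/(T+1)^c. -/
open Finset

lemma harmonic_lb (t T : ℕ) (ht : 1 ≤ t) (htT : t ≤ T) :
    Real.log ((T : ℝ) + 1) - Real.log t - 1 ≤ ∑ u ∈ Icc (t + 1) T, (1 : ℝ) / u := by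
  have htpos : (0 : ℝ) < t := by exact_mod_cast ht
  have key : ∀ u ∈ Icc (t + 1) T, Real.log ((u : ℝ) + 1) - Real.log u ≤ (1 : ℝ) / u := by
    intro u hu
    have hu1 : 1 ≤ u := by
      have := (Finset.mem_Icc.1 hu).1; omega
    have hup : (0 : ℝ) < u := by exact_mod_cast hu1
    have h := Real.log_le_sub_one_of_pos (x := ((u : ℝ) + 1) / u) (by positivity)
    rw [Real.log_div (by positivity) (ne_of_gt hup)] at h
    have he : ((u : ℝ) + 1) / u - 1 = 1 / u := by field_simp; ring
    linarith [he ▸ h]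
  have h1 : ∀ n : ℕ, ∑ u ∈ Finset.range n, (Real.log ((u : ℝ) + 1) - Real.log u)
      = Real.log (n : ℝ) := by
    intro n
    have := Finset.sum_range_sub (f := fun n : ℕ => Real.log (n : ℝ)) n
    push_cast at this
    simpa [Real.log_zero] using this
  have tel : ∑ u ∈ Icc (t + 1) T, (Real.log ((u : ℝ) + 1) - Real.log u)
      = Real.log ((T : ℝ) + 1) - Real.log ((t : ℝ) + 1) := by
    rw [← Finset.Ico_add_one_right_eq_Icc, Finset.sum_Ico_eq_sub _ (by omega), h1, h1]
    push_cast
    ring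
  have hlog : Real.log ((t : ℝ) + 1) ≤ Real.log t + 1 := by
    have h2 : (2 : ℝ) ≤ Real.exp 1 := by
      have := Real.add_one_le_exp 1; linarith
    have ht1 : (1 : ℝ) ≤ t := by exact_mod_cast ht
    have h3 : ((t : ℝ) + 1) ≤ Real.exp 1 * t := by nlinarith
    calc Real.log ((t : ℝ) + 1) ≤ Real.log (Real.exp 1 * t) :=
          Real.log_le_log (by positivity) h3
      _ = Real.log t + 1 := by
          rw [Real.log_mul (Real.exp_ne_zero 1) (ne_of_gt htpos), Real.log_exp]; ring
  calc Real.log ((T : ℝ) + 1) - Real.log t - 1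
      ≤ Real.log ((T : ℝ) + 1) - Real.log ((t : ℝ) + 1) := by linarith
    _ = ∑ u ∈ Icc (t + 1) T, (Real.log ((u : ℝ) + 1) - Real.log u) := tel.symm
    _ ≤ ∑ u ∈ Icc (t + 1) T, (1 : ℝ) / u := Finset.sum_le_sum key

lemma sum_rpow_le (T : ℕ) (hT : 1 ≤ T) (c : ℝ) (hc : 1 < c) :
    ∑ t ∈ Icc 1 T, (t : ℝ) ^ (c - 2) ≤ (((T : ℝ) + 1) ^ (c - 1) + c - 2) / (c - 1) := by
  have hc1 : 0 < c - 1 := by linarith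
  have hInt : ∀ a b : ℕ, (∫ x in (a : ℝ)..(b : ℝ), x ^ (c - 2))
      = ((b : ℝ) ^ (c - 1) - (a : ℝ) ^ (c - 1)) / (c - 1) := by
    intro a b
    rw [integral_rpow (Or.inl (by linarith))]
    rw [show c - 2 + 1 = c - 1 from by ring]
  have hT1 : (1 : ℝ) ≤ T := by exact_mod_cast hT
  rcases le_or_gt c 2 with h2 | h2
  · -- antitone case
    have hanti : AntitoneOn (fun x : ℝ => x ^ (c - 2)) (Set.Icc (1 : ℝ) T) := by
      intro x hx y hy hxy
      exact Real.rpow_le_rpow_of_nonpos (lt_of_lt_of_le one_pos hx.1) hxy (by linarith)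
    have hsplit : ∑ t ∈ Icc 1 T, (t : ℝ) ^ (c - 2)
        = (1 : ℝ) + ∑ i ∈ Finset.Ico 1 T, ((i + 1 : ℕ) : ℝ) ^ (c - 2) := by
      rw [← Finset.add_sum_erase _ _ (Finset.mem_Icc.2 ⟨le_refl 1, hT⟩),
        Finset.Icc_erase_left, ← Finset.Icc_add_one_left_eq_Ioc, ← Finset.Ico_add_one_right_eq_Icc]
      norm_num
      rw [show Finset.Ico 2 (T+1) = Finset.Ico (1+1) (T+1) from rfl]
      rw [Finset.sum_Ico_eq_sum_range, Finset.sum_Ico_eq_sum_range,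
        show T + 1 - (1 + 1) = T - 1 from by omega]
      refine Finset.sum_congr rfl fun k _ => ?_
      congr 1
      push_cast
      ring
    rw [hsplit]
    have hb : ∑ i ∈ Finset.Ico 1 T, ((i + 1 : ℕ) : ℝ) ^ (c - 2)
        ≤ ((T : ℝ) ^ (c - 1) - 1) / (c - 1) := by
      have := AntitoneOn.sum_le_integral_Ico (f := fun x : ℝ => x ^ (c - 2)) hT
        (by exact_mod_cast hanti)
      rw [hInt 1 T] at this
      simpa using this
    have hmonoT : (T : ℝ) ^ (c - 1) ≤ ((T : ℝ) + 1) ^ (c - 1) :=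
      Real.rpow_le_rpow (by positivity) (by linarith) (by linarith)
    have : (1 : ℝ) + (((T : ℝ) + 1) ^ (c - 1) - 1) / (c - 1)
        = (((T : ℝ) + 1) ^ (c - 1) + c - 2) / (c - 1) := by
      field_simp
      ring
    rw [← this]
    have h4 : ((T : ℝ) ^ (c - 1) - 1) / (c - 1) ≤ (((T : ℝ) + 1) ^ (c - 1) - 1) / (c - 1) := by
      gcongr
    linarith
  · -- monotone case
    have hmono : MonotoneOn (fun x : ℝ => x ^ (c - 2)) (Set.Icc (1 : ℝ) ((T : ℝ) + 1)) := by
      intro x hx y hy hxy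
      exact Real.rpow_le_rpow (le_trans zero_le_one hx.1) hxy (by linarith)
    have hb := MonotoneOn.sum_le_integral_Ico (f := fun x : ℝ => x ^ (c - 2))
      (a := 1) (b := T + 1) (by omega) (by push_cast; exact hmono)
    rw [hInt 1 (T + 1)] at hb
    rw [← Finset.Ico_add_one_right_eq_Icc]
    refine le_trans hb ?_
    push_cast
    rw [Real.one_rpow]
    exact (div_le_div_iff_of_pos_right hc1).mpr (by linarith)

theorem stmt_9 (η : ℕ → ℝ) (m M τ μ : ℝ) (T : ℕ) (hT : 1 ≤ T)
    (hm : 0 < m) (hmM : m ≤ M) (hτ : 0 < τ) (hμ : 0 < μ)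
    (hband : ∀ t ∈ Icc 1 T, m / t ≤ η t ∧ η t ≤ M / t)
    (hc : 1 < τ * μ * m) :
    ∑ t ∈ Icc 1 T, η t ^ 2 * Real.exp (-τ * μ * ∑ u ∈ Icc (t + 1) T, η u) ≤
      M ^ 2 * Real.exp (τ * μ * m) / (τ * μ * m - 1) *
        ((((T : ℝ) + 1) ^ (τ * μ * m - 1) + τ * μ * m - 2) / ((T : ℝ) + 1) ^ (τ * μ * m)) := by
  set c := τ * μ * m with hc'
  have hS : (0 : ℝ) < (T : ℝ) + 1 := by positivity
  have hτμ : 0 < τ * μ := mul_pos hτ hμ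
  have hM : 0 < M := lt_of_lt_of_le hm hmM
  have hSc : (0 : ℝ) < ((T : ℝ) + 1) ^ c := Real.rpow_pos_of_pos hS c
  have key : ∀ t ∈ Icc 1 T, η t ^ 2 * Real.exp (-τ * μ * ∑ u ∈ Icc (t + 1) T, η u)
      ≤ M ^ 2 * Real.exp c / ((T : ℝ) + 1) ^ c * (t : ℝ) ^ (c - 2) := by
    intro t ht'
    obtain ⟨ht1, htT⟩ := Finset.mem_Icc.1 ht'
    have htp : (0 : ℝ) < t := by exact_mod_cast ht1
    obtain ⟨hl, hr⟩ := hband t ht'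
    have hη0 : 0 ≤ η t := le_trans (by positivity) hl
    have hsq : η t ^ 2 ≤ (M / t) ^ 2 := pow_le_pow_left₀ hη0 hr 2
    have hsum : m * (Real.log ((T : ℝ) + 1) - Real.log t - 1) ≤ ∑ u ∈ Icc (t + 1) T, η u := by
      calc m * (Real.log ((T : ℝ) + 1) - Real.log t - 1)
          ≤ m * ∑ u ∈ Icc (t + 1) T, (1 : ℝ) / u :=
            mul_le_mul_of_nonneg_left (harmonic_lb t T ht1 htT) hm.le
        _ = ∑ u ∈ Icc (t + 1) T, m / u := by
            rw [Finset.mul_sum]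
            exact Finset.sum_congr rfl fun u _ => by rw [mul_one_div]
        _ ≤ ∑ u ∈ Icc (t + 1) T, η u := Finset.sum_le_sum fun u hu => by
            have hu' : u ∈ Icc 1 T := by
              simp only [Finset.mem_Icc] at hu ⊢; omega
            exact (hband u hu').1
    have hexp : Real.exp (-τ * μ * ∑ u ∈ Icc (t + 1) T, η u)
        ≤ Real.exp c * (t : ℝ) ^ c / ((T : ℝ) + 1) ^ c := by
      have hc0 : -τ * μ ≤ 0 := by rw [neg_mul]; exact neg_nonpos.2 hτμ.le
      have h1 : -τ * μ * ∑ u ∈ Icc (t + 1) T, η u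
          ≤ -τ * μ * (m * (Real.log ((T : ℝ) + 1) - Real.log t - 1)) :=
        mul_le_mul_of_nonpos_left hsum hc0
      calc Real.exp (-τ * μ * ∑ u ∈ Icc (t + 1) T, η u)
          ≤ Real.exp (-τ * μ * (m * (Real.log ((T : ℝ) + 1) - Real.log t - 1))) :=
            Real.exp_le_exp.mpr h1
        _ = Real.exp c * (t : ℝ) ^ c / ((T : ℝ) + 1) ^ c := by
            rw [Real.rpow_def_of_pos htp, Real.rpow_def_of_pos hS, ← Real.exp_add,
              ← Real.exp_sub]
            congr 1
            rw [hc']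
            ring
    calc η t ^ 2 * Real.exp (-τ * μ * ∑ u ∈ Icc (t + 1) T, η u)
        ≤ (M / t) ^ 2 * (Real.exp c * (t : ℝ) ^ c / ((T : ℝ) + 1) ^ c) :=
          mul_le_mul hsq hexp (Real.exp_pos _).le (by positivity)
      _ = M ^ 2 * Real.exp c / ((T : ℝ) + 1) ^ c * (t : ℝ) ^ (c - 2) := by
          rw [Real.rpow_sub htp, div_pow,
            show (2 : ℝ) = ((2 : ℕ) : ℝ) from by norm_num, Real.rpow_natCast]
          have ht2 : (t : ℝ) ^ 2 ≠ 0 := by positivity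
          field_simp
  calc ∑ t ∈ Icc 1 T, η t ^ 2 * Real.exp (-τ * μ * ∑ u ∈ Icc (t + 1) T, η u)
      ≤ ∑ t ∈ Icc 1 T, M ^ 2 * Real.exp c / ((T : ℝ) + 1) ^ c * (t : ℝ) ^ (c - 2) :=
        Finset.sum_le_sum key
    _ = M ^ 2 * Real.exp c / ((T : ℝ) + 1) ^ c * ∑ t ∈ Icc 1 T, (t : ℝ) ^ (c - 2) := by
        rw [Finset.mul_sum]
    _ ≤ M ^ 2 * Real.exp c / ((T : ℝ) + 1) ^ c * ((((T : ℝ) + 1) ^ (c - 1) + c - 2) / (c - 1)) :=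
        mul_le_mul_of_nonneg_left (sum_rpow_le T hT c hc) (by positivity)
    _ = M ^ 2 * Real.exp c / (c - 1) * ((((T : ℝ) + 1) ^ (c - 1) + c - 2) / ((T : ℝ) + 1) ^ c) := by
        ring
end

section
/- Suppose real numbers (η_t) satisfy m/t ≤ η_t ≤ M/t for 1 ≤ t ≤ T with τμm = 1 for constants τ, μ, m, M > 0. Then Σ_{t=1}^{T} η_t² exp(-τμ Σ_{u=t+1}^{T} η_u) ≤ M² exp(1) (ln(T) + 1)/(T+1). -/
open Finset

lemma logA (t T : ℕ) (h : t ≤ T) :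
    Real.log (T + 1) - Real.log (t + 1) ≤ ∑ u ∈ Icc (t + 1) T, (1 : ℝ) / u := by
  induction T with
  | zero => interval_cases t; simp
  | succ T ih =>
    rcases Nat.eq_or_lt_of_le h with h' | h'
    · subst h'; simp
    · have ht : t ≤ T := Nat.lt_succ_iff.mp h'
      rw [Finset.sum_Icc_succ_top (Nat.succ_le_succ ht)]
      have hT1 : (0 : ℝ) < (T : ℝ) + 1 := by positivity
      have key : Real.log ((T : ℝ) + 1 + 1) - Real.log ((T : ℝ) + 1) ≤ 1 / ((T : ℝ) + 1) := by
        have h1 : Real.log (((T : ℝ) + 1 + 1) / ((T : ℝ) + 1)) ≤ ((T : ℝ) + 1 + 1) / ((T : ℝ) + 1) - 1 :=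
          Real.log_le_sub_one_of_pos (by positivity)
        rw [Real.log_div (by positivity) (by positivity)] at h1
        have : ((T : ℝ) + 1 + 1) / ((T : ℝ) + 1) - 1 = 1 / ((T : ℝ) + 1) := by
          field_simp
          ring
        linarith [this ▸ h1]
      have hih := ih ht
      push_cast
      push_cast at hih
      linarith

lemma logB (T : ℕ) (hT : 1 ≤ T) :
    ∑ t ∈ Icc 1 T, (1 : ℝ) / t ≤ Real.log T + 1 := by
  induction T with
  | zero => omega
  | succ T ih =>
    rcases Nat.eq_or_lt_of_le hT with h' | h'
    · simp [← h']
    · have hT1 : 1 ≤ T := Nat.lt_succ_iff.mp h'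
      rw [Finset.sum_Icc_succ_top (by omega : 1 ≤ T + 1)]
      have hTpos : (0 : ℝ) < (T : ℝ) := by positivity
      have key : 1 / ((T : ℝ) + 1) ≤ Real.log ((T : ℝ) + 1) - Real.log T := by
        have h1 : Real.log ((T : ℝ) / ((T : ℝ) + 1)) ≤ (T : ℝ) / ((T : ℝ) + 1) - 1 :=
          Real.log_le_sub_one_of_pos (by positivity)
        rw [Real.log_div (by positivity) (by positivity)] at h1
        have : (T : ℝ) / ((T : ℝ) + 1) - 1 = -(1 / ((T : ℝ) + 1)) := by field_simp; ring
        linarith [this ▸ h1]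
      have hih := ih hT1
      push_cast
      linarith

theorem stmt_10 (η : ℕ → ℝ) (m M τ μ : ℝ) (T : ℕ) (hT : 1 ≤ T)
    (hm : 0 < m) (hM : 0 < M) (hτ : 0 < τ) (hμ : 0 < μ)
    (hband : ∀ t ∈ Icc 1 T, m / t ≤ η t ∧ η t ≤ M / t)
    (hc : τ * μ * m = 1) :
    ∑ t ∈ Icc 1 T, η t ^ 2 * Real.exp (-τ * μ * ∑ u ∈ Icc (t + 1) T, η u) ≤
      M ^ 2 * Real.exp 1 * (Real.log T + 1) / ((T : ℝ) + 1) := by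
  have hTpos : (0 : ℝ) < (T : ℝ) + 1 := by positivity
  have step : ∀ t ∈ Icc 1 T,
      η t ^ 2 * Real.exp (-τ * μ * ∑ u ∈ Icc (t + 1) T, η u) ≤
        M ^ 2 * Real.exp 1 / ((T : ℝ) + 1) * (1 / t) := by
    intro t ht
    rw [mem_Icc] at ht
    obtain ⟨ht1, ht2⟩ := ht
    have htpos : (0 : ℝ) < (t : ℝ) := by positivity
    -- bound on η t ^2
    have hbt := hband t (mem_Icc.mpr ⟨ht1, ht2⟩)
    have hη_pos : 0 < η t := lt_of_lt_of_le (by positivity) hbt.1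
    have hη2 : η t ^ 2 ≤ (M / t) ^ 2 := by
      apply pow_le_pow_left₀ (le_of_lt hη_pos) hbt.2
    -- bound sum below
    have hsum : m * ∑ u ∈ Icc (t + 1) T, (1 : ℝ) / u ≤ ∑ u ∈ Icc (t + 1) T, η u := by
      rw [Finset.mul_sum]
      apply Finset.sum_le_sum
      intro u hu
      rw [mem_Icc] at hu
      have := (hband u (mem_Icc.mpr ⟨by omega, hu.2⟩)).1
      rw [mul_one_div]
      exact this
    have hlog : Real.log (T + 1) - Real.log (t + 1) ≤ ∑ u ∈ Icc (t + 1) T, (1 : ℝ) / u :=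
      logA t T ht2
    have hlt1 : Real.log ((t : ℝ) + 1) ≤ Real.log t + 1 := by
      have h2 : (2 : ℝ) ≤ Real.exp 1 := by
        have := Real.add_one_le_exp 1
        linarith
      have : (t : ℝ) + 1 ≤ Real.exp 1 * t := by
        nlinarith [htpos, (Nat.one_le_cast.mpr ht1 : (1:ℝ) ≤ (t:ℝ))]
      calc Real.log ((t : ℝ) + 1) ≤ Real.log (Real.exp 1 * t) :=
            Real.log_le_log (by positivity) this
        _ = Real.log t + 1 := by
            rw [Real.log_mul (Real.exp_ne_zero 1) (ne_of_gt htpos), Real.log_exp]; ring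
    -- exponential bound
    have hexp : Real.exp (-τ * μ * ∑ u ∈ Icc (t + 1) T, η u) ≤
        Real.exp 1 * t / ((T : ℝ) + 1) := by
      have harg : -τ * μ * ∑ u ∈ Icc (t + 1) T, η u ≤ 1 + Real.log t - Real.log ((T : ℝ) + 1) := by
        have hτμ : 0 < τ * μ := by positivity
        have h1 : τ * μ * (m * ∑ u ∈ Icc (t + 1) T, (1 : ℝ) / u)
            ≤ τ * μ * ∑ u ∈ Icc (t + 1) T, η u :=
          mul_le_mul_of_nonneg_left hsum (le_of_lt hτμ)
        have h2 : τ * μ * (m * ∑ u ∈ Icc (t + 1) T, (1 : ℝ) / u)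
            = ∑ u ∈ Icc (t + 1) T, (1 : ℝ) / u := by
          rw [← mul_assoc, hc, one_mul]
        push_cast at hlog
        nlinarith [hlog, hlt1]
      calc Real.exp (-τ * μ * ∑ u ∈ Icc (t + 1) T, η u)
          ≤ Real.exp (1 + Real.log t - Real.log ((T : ℝ) + 1)) := Real.exp_le_exp.mpr harg
        _ = Real.exp 1 * t / ((T : ℝ) + 1) := by
            rw [sub_eq_add_neg, Real.exp_add, Real.exp_add, Real.exp_neg,
              Real.exp_log htpos, Real.exp_log hTpos]
            ring
    calc η t ^ 2 * Real.exp (-τ * μ * ∑ u ∈ Icc (t + 1) T, η u)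
        ≤ (M / t) ^ 2 * (Real.exp 1 * t / ((T : ℝ) + 1)) := by
          apply mul_le_mul hη2 hexp (Real.exp_pos _).le (by positivity)
      _ = M ^ 2 * Real.exp 1 / ((T : ℝ) + 1) * (1 / t) := by
          field_simp
  calc ∑ t ∈ Icc 1 T, η t ^ 2 * Real.exp (-τ * μ * ∑ u ∈ Icc (t + 1) T, η u)
      ≤ ∑ t ∈ Icc 1 T, M ^ 2 * Real.exp 1 / ((T : ℝ) + 1) * (1 / t) :=
        Finset.sum_le_sum step
    _ = M ^ 2 * Real.exp 1 / ((T : ℝ) + 1) * ∑ t ∈ Icc 1 T, (1 : ℝ) / t := by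
        rw [Finset.mul_sum]
    _ ≤ M ^ 2 * Real.exp 1 / ((T : ℝ) + 1) * (Real.log T + 1) := by
        apply mul_le_mul_of_nonneg_left (logB T hT) (by positivity)
    _ = M ^ 2 * Real.exp 1 * (Real.log T + 1) / ((T : ℝ) + 1) := by ring
end

section
/- Let δ : [1, ∞) → (0, ∞) be differentiable with δ'(l) ≤ 0, fix t ≥ 1, constants c, c₁ > 0 with c₁ < c, and T_M ∈ [1, t]. Suppose -δ'(l) ≤ c₁ δ(l)² for all l ≥ T_M. Then c ∫_{T_M}^{t+1} δ(l)² exp(-c ∫_{l}^{t+1} δ(u) du) dl ≤ δ(t+1) - δ(T_M) exp(-c ∫_{T_M}^{t+1} δ(u) du) + c₁ ∫_{T_M}^{t+1} δ(l)² exp(-c ∫_{l}^{t+1} δ(u) du) dl, and hence ∫_{T_M}^{t+1} δ(l)² exp(-c ∫_{l}^{t+1} δ(u) du) dl ≤ δ(t+1)/(c - c₁). -/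
open MeasureTheory intervalIntegral Set

theorem stmt_14 (δ δ' : ℝ → ℝ) (t c c₁ T_M : ℝ)
    (hderiv : ∀ l : ℝ, 1 ≤ l → HasDerivAt δ (δ' l) l)
    (hpos : ∀ l : ℝ, 1 ≤ l → 0 < δ l)
    (hdec : ∀ l : ℝ, 1 ≤ l → δ' l ≤ 0)
    (ht : 1 ≤ t) (hc₁ : 0 < c₁) (hc : c₁ < c) (hcpos : 0 < c)
    (hTM : 1 ≤ T_M) (hTMt : T_M ≤ t)
    (hineq : ∀ l : ℝ, T_M ≤ l → -δ' l ≤ c₁ * δ l ^ 2) :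
    c * ∫ l in T_M..(t + 1), δ l ^ 2 * Real.exp (-c * ∫ u in l..(t + 1), δ u) ≤
        δ (t + 1) - δ T_M * Real.exp (-c * ∫ u in T_M..(t + 1), δ u) +
          c₁ * ∫ l in T_M..(t + 1), δ l ^ 2 * Real.exp (-c * ∫ u in l..(t + 1), δ u) ∧
      (∫ l in T_M..(t + 1), δ l ^ 2 * Real.exp (-c * ∫ u in l..(t + 1), δ u)) ≤
        δ (t + 1) / (c - c₁) := by
  set b := t + 1 with hb_def
  have hb : T_M ≤ b := by linarith
  set g : ℝ → ℝ := fun l => ∫ u in l..b, δ u with hg_def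
  set E : ℝ → ℝ := fun l => Real.exp (-c * g l) with hE_def
  -- continuity of δ on [1, ∞)
  have hδcont : ∀ l : ℝ, 1 ≤ l → ContinuousAt δ l := fun l hl =>
    (hderiv l hl).continuousAt
  have hδcontOn : ∀ s : Set ℝ, s ⊆ Ici 1 → ContinuousOn δ s := fun s hs x hx =>
    (hδcont x (hs hx)).continuousWithinAt
  have hIcc : Icc T_M b ⊆ Ici (1:ℝ) := fun x hx => le_trans hTM hx.1
  have hδcontIcc : ContinuousOn δ (Icc T_M b) := hδcontOn _ hIcc
  -- interval integrability of δ on subintervals of [T_M, b]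
  have hδint : ∀ x ∈ Icc T_M b, ∀ y ∈ Icc T_M b, IntervalIntegrable δ volume x y := by
    intro x hx y hy
    apply (hδcontIcc.mono _).intervalIntegrable
    exact uIcc_subset_Icc hx hy
  -- g is continuous on [T_M, b]
  have hg_eq : ∀ l ∈ Icc T_M b, g l = (∫ u in T_M..b, δ u) - ∫ u in T_M..l, δ u := by
    intro l hl
    have := integral_add_adjacent_intervals (hδint T_M ⟨le_refl _, hb⟩ l hl)
      (hδint l hl b ⟨hb, le_refl _⟩)
    simp only [hg_def]
    linarith [this]
  have hgcont : ContinuousOn g (Icc T_M b) := by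
    have h1 : ContinuousOn (fun l => (∫ u in T_M..b, δ u) - ∫ u in T_M..l, δ u)
        (Icc T_M b) := by
      apply ContinuousOn.sub continuousOn_const
      have : ContinuousOn (fun l => ∫ u in T_M..l, δ u) (uIcc T_M b) :=
        continuousOn_primitive_interval (by
          rw [uIcc_of_le hb]
          exact hδcontIcc.integrableOn_compact isCompact_Icc)
      rwa [uIcc_of_le hb] at this
    exact ContinuousOn.congr h1 hg_eq
  have hEcont : ContinuousOn E (Icc T_M b) :=
    Real.continuous_exp.comp_continuousOn (hgcont.const_smul (-c))
  have hEpos : ∀ l, 0 < E l := fun l => Real.exp_pos _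
  have hEle1 : ∀ l ∈ Icc T_M b, E l ≤ 1 := by
    intro l hl
    have hgnn : 0 ≤ g l := by
      apply intervalIntegral.integral_nonneg hl.2
      intro u hu
      exact (hpos u (le_trans hTM (le_trans hl.1 hu.1))).le
    simp only [hE_def]
    rw [show (1:ℝ) = Real.exp 0 by simp]
    apply Real.exp_le_exp.mpr
    nlinarith
  -- derivative of g on the open interval
  have hg_deriv : ∀ l ∈ Ioo T_M b, HasDerivAt g (-δ l) l := by
    intro l hl
    have hl1 : 1 < l := lt_of_le_of_lt hTM hl.1
    apply integral_hasDerivAt_left (hδint l ⟨hl.1.le, hl.2.le⟩ b ⟨hb, le_refl _⟩)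
    · exact ⟨Ioi 1, Ioi_mem_nhds hl1,
        (hδcontOn (Ioi 1) Ioi_subset_Ici_self).aestronglyMeasurable measurableSet_Ioi⟩
    · exact hδcont l hl1.le
  -- F and its derivative
  set F : ℝ → ℝ := fun l => δ l * E l with hF_def
  set F' : ℝ → ℝ := fun l => (δ' l + c * δ l ^ 2) * E l with hF'_def
  have hF_deriv : ∀ l ∈ Ioo T_M b, HasDerivAt F (F' l) l := by
    intro l hl
    have hl1 : (1:ℝ) ≤ l := le_trans hTM hl.1.le
    have hE : HasDerivAt E (c * δ l * E l) l := by
      have := ((hg_deriv l hl).const_mul (-c)).exp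
      convert this using 1
      simp only [hE_def]
      ring
    have : HasDerivAt (fun y => δ y * E y) (δ' l * E l + δ l * (c * δ l * E l)) l :=
      (hderiv l hl1).mul hE
    convert this using 1
    simp only [hF'_def, hE_def]
    ring
  have hFcont : ContinuousOn F (Icc T_M b) := hδcontIcc.mul hEcont
  -- bound for δ on Icc
  obtain ⟨x₀, hx₀, hM⟩ := isCompact_Icc.exists_isMaxOn (nonempty_Icc.mpr hb) hδcontIcc
  set M := δ x₀ with hM_def
  have hMpos : 0 < M := hpos x₀ (hIcc hx₀)
  -- integrability of F'
  have hF'bound : ∀ l ∈ Icc T_M b, ‖F' l‖ ≤ c * M ^ 2 := by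
    intro l hl
    have hl1 : (1:ℝ) ≤ l := hIcc hl
    have h1 : -δ' l ≤ c₁ * δ l ^ 2 := hineq l hl.1
    have h2 : δ' l ≤ 0 := hdec l hl1
    have hdl : 0 < δ l := hpos l hl1
    have hdM : δ l ≤ M := hM hl
    have hE1 : E l ≤ 1 := hEle1 l hl
    have hE0 : 0 < E l := hEpos l
    have h5 : 0 ≤ δ' l + c * δ l ^ 2 := by nlinarith
    have hnn : 0 ≤ (δ' l + c * δ l ^ 2) * E l := mul_nonneg h5 hE0.le
    rw [Real.norm_eq_abs, abs_of_nonneg hnn]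
    have hA : (δ' l + c * δ l ^ 2) * E l ≤ (c * δ l ^ 2) * E l :=
      mul_le_mul_of_nonneg_right (by linarith) hE0.le
    have hB : (c * δ l ^ 2) * E l ≤ c * δ l ^ 2 * 1 := by
      apply mul_le_mul_of_nonneg_left hE1
      positivity
    have hsq : δ l ^ 2 ≤ M ^ 2 := by nlinarith
    have hC : c * δ l ^ 2 ≤ c * M ^ 2 := by nlinarith
    linarith
  have hF'meas : AEStronglyMeasurable F' (volume.restrict (Ioc T_M b)) := by
    have h1 : AEStronglyMeasurable (deriv δ) (volume.restrict (Ioc T_M b)) :=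
      (measurable_deriv δ).aestronglyMeasurable.restrict
    have h2 : AEStronglyMeasurable E (volume.restrict (Ioc T_M b)) :=
      ((hEcont.mono Ioc_subset_Icc_self).aestronglyMeasurable measurableSet_Ioc)
    have h3 : AEStronglyMeasurable δ (volume.restrict (Ioc T_M b)) :=
      ((hδcontIcc.mono Ioc_subset_Icc_self).aestronglyMeasurable measurableSet_Ioc)
    have h4 : AEStronglyMeasurable (fun l => (deriv δ l + c * δ l ^ 2) * E l)
        (volume.restrict (Ioc T_M b)) := by
      exact ((h1.add (((h3.mul h3).const_mul c).congr (by
        filter_upwards with x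
        simp only [Pi.mul_apply]
        ring))).mul h2)
    apply h4.congr
    filter_upwards [ae_restrict_mem measurableSet_Ioc] with x hx
    have : deriv δ x = δ' x := (hderiv x (le_trans hTM hx.1.le)).deriv
    rw [this]
  have hF'int : IntervalIntegrable F' volume T_M b := by
    rw [intervalIntegrable_iff, uIoc_of_le hb]
    refine ⟨hF'meas, ?_⟩
    apply HasFiniteIntegral.restrict_of_bounded (C := c * M ^ 2) measure_Ioc_lt_top
    filter_upwards [ae_restrict_mem measurableSet_Ioc] with x hx
    exact hF'bound x (Ioc_subset_Icc_self hx)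
  -- FTC
  have hFTC : ∫ l in T_M..b, F' l = F b - F T_M :=
    integral_eq_sub_of_hasDeriv_right_of_le hb hFcont
      (fun x hx => (hF_deriv x hx).hasDerivWithinAt) hF'int
  have hFb : F b = δ b := by
    simp only [hF_def, hE_def, hg_def]
    simp
  -- continuity/integrability of δ² E
  have hcontInt : ContinuousOn (fun l => δ l ^ 2 * E l) (Icc T_M b) :=
    (hδcontIcc.pow 2).mul hEcont
  have hInt1 : IntervalIntegrable (fun l => δ l ^ 2 * E l) volume T_M b :=
    (hcontInt.mono (by rw [uIcc_of_le hb])).intervalIntegrable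
  -- pointwise comparison
  have hmono : ∫ l in T_M..b, (c - c₁) * (δ l ^ 2 * E l) ≤ ∫ l in T_M..b, F' l := by
    apply integral_mono_on hb (hInt1.const_mul _) hF'int
    intro x hx
    have hx1 : (1:ℝ) ≤ x := hIcc hx
    have h1 : -δ' x ≤ c₁ * δ x ^ 2 := hineq x hx.1
    have hE0 : 0 < E x := hEpos x
    simp only [hF'_def]
    nlinarith
  rw [intervalIntegral.integral_const_mul] at hmono
  set I := ∫ l in T_M..b, δ l ^ 2 * E l with hI_def
  have key : (c - c₁) * I ≤ δ b - δ T_M * E T_M := by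
    rw [hFTC, hFb] at hmono
    simp only [hF_def] at hmono
    linarith
  have hE0 : 0 < E T_M := hEpos T_M
  have hδTM : 0 < δ T_M := hpos T_M hTM
  have hIeq : I = ∫ l in T_M..(t+1), δ l ^ 2 * Real.exp (-c * ∫ u in l..(t + 1), δ u) := rfl
  constructor
  · have hETM : Real.exp (-c * ∫ u in T_M..b, δ u) = E T_M := rfl
    rw [hETM]
    linarith
  · rw [le_div_iff₀ (by linarith)]
    nlinarith [mul_pos hδTM hE0]
end
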